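/- Let f(x,t) be a joint density over d ordered variables and dropout time t, with monotone missingness. For fixed t < s ≤ d and a set of donor times A ⊆ {s,...,d}, the donor-based identifying restriction f(x_s | x_{<s}, T=t) = g(x_s | x_{<s}, T ∈ A) holds if and only if the ratio f(T=t | x_{≤s}) / f(T ∈ A | x_{≤s}) is constant as a function of x_s (assuming all densities/conditional probabilities involved are strictly positive). -/

import Mathlib

open Finset

/-- Marginal density of the first `s` coordinates: `marg f s x = f(x_{≤ s})`,
obtained by summing the joint density `f` over all completions that agree
with `x` on the first `s` coordinates (discrete finite sample spaces). -/
def marg {d : ℕ} {α : Type*} [Fintype α] [DecidableEq α]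
    (f : (Fin d → α) → ℝ) (s : ℕ) (x : Fin d → α) : ℝ :=
  ∑ z : Fin d → α, if ∀ j : Fin d, (j : ℕ) < s → z j = x j then f z else 0

lemma marg_congr {d : ℕ} {α : Type*} [Fintype α] [DecidableEq α]
    (f : (Fin d → α) → ℝ) (s : ℕ) {x y : Fin d → α}
    (h : ∀ j : Fin d, (j : ℕ) < s → x j = y j) : marg f s x = marg f s y := by
  unfold marg
  refine Finset.sum_congr rfl fun z _ => ?_
  refine if_congr ⟨fun hz j hj => (hz j hj).trans (h j hj),
    fun hz j hj => (hz j hj).trans (h j hj).symm⟩ rfl rfl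

lemma marg_pos {d : ℕ} {α : Type*} [Fintype α] [DecidableEq α]
    {f : (Fin d → α) → ℝ} (hf : ∀ z, 0 < f z) (s : ℕ) (x : Fin d → α) :
    0 < marg f s x := by
  rw [marg]
  refine lt_of_lt_of_le (hf x) ?_
  have h := Finset.single_le_sum
    (f := fun z : Fin d → α => if ∀ j : Fin d, (j : ℕ) < s → z j = x j then f z else 0)
    (fun z _ => by split_ifs with h; exacts [(hf z).le, le_rfl]) (Finset.mem_univ x)
  simpa using h

lemma marg_step {d : ℕ} {α : Type*} [Fintype α] [DecidableEq α]
    (f : (Fin d → α) → ℝ) {m : ℕ} (hm : m < d) (x : Fin d → α) :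
    marg f m x = ∑ v : α, marg f (m + 1) (Function.update x ⟨m, hm⟩ v) := by
  unfold marg
  rw [Finset.sum_comm]
  refine Finset.sum_congr rfl fun z _ => ?_
  have key : ∀ v : α,
      (∀ j : Fin d, (j : ℕ) < m + 1 → z j = Function.update x ⟨m, hm⟩ v j) ↔
        ((∀ j : Fin d, (j : ℕ) < m → z j = x j) ∧ z ⟨m, hm⟩ = v) := by
    intro v
    constructor
    · intro h
      refine ⟨fun j hj => ?_, ?_⟩
      · have hne : j ≠ (⟨m, hm⟩ : Fin d) := by
          intro e; rw [e] at hj; simp at hj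
        have := h j (Nat.lt_succ_of_lt hj)
        rwa [Function.update_of_ne hne] at this
      · have := h ⟨m, hm⟩ (Nat.lt_succ_self m)
        rwa [Function.update_self] at this
    · rintro ⟨h1, h2⟩ j hj
      rcases eq_or_ne j (⟨m, hm⟩ : Fin d) with rfl | hne
      · rw [Function.update_self]; exact h2
      · rw [Function.update_of_ne hne]
        refine h1 j ?_
        have : (j : ℕ) ≠ m := fun e => hne (Fin.ext e)
        omega
  simp only [key]
  by_cases hP : ∀ j : Fin d, (j : ℕ) < m → z j = x j
  · rw [if_pos hP]
    have h2 : ∀ v : α, ((∀ j : Fin d, (j : ℕ) < m → z j = x j) ∧ z ⟨m, hm⟩ = v) ↔ z ⟨m, hm⟩ = v :=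
      fun v => and_iff_right hP
    simp only [h2]
    simp [Finset.sum_ite_eq]
  · simp [hP]

/-- For monotone missingness with dropout time `T ∈ {0,…,d}` and
full-data density `f(x,t) > 0`, fixed `t < s ≤ d` and a donor set
`A ⊆ {s,…,d}`, the donor-based restriction
`f(x_s | x_{<s}, T = t) = g(x_s | x_{<s}, T ∈ A)` holds (for all `x`) iff
the odds ratio `f(T = t | x_{≤ s}) / f(T ∈ A | x_{≤ s})` is constant as a
function of `x_s` (i.e. depends only on `x_{<s}`).  Coordinates are
0-indexed, so `x_{≤ s}` is coordinates `j < s` and `x_s` is coordinate `s-1`. -/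
theorem donor_restriction_iff_odds_constant
    {d : ℕ} {α : Type*} [Fintype α] [DecidableEq α]
    (f : (Fin d → α) → Fin (d + 1) → ℝ)
    (hf : ∀ x t, 0 < f x t)
    (t : Fin (d + 1)) (s : ℕ) (hts : (t : ℕ) < s) (hsd : s ≤ d)
    (A : Finset (Fin (d + 1))) (hA : ∀ a ∈ A, s ≤ (a : ℕ)) (hAne : A.Nonempty) :
    (∀ x : Fin d → α,
        marg (fun z => f z t) s x / marg (fun z => f z t) (s - 1) x =
          (∑ a ∈ A, marg (fun z => f z a) s x) /
            (∑ a ∈ A, marg (fun z => f z a) (s - 1) x))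
      ↔
    (∀ x y : Fin d → α, (∀ j : Fin d, (j : ℕ) + 1 < s → x j = y j) →
        marg (fun z => f z t) s x / (∑ a ∈ A, marg (fun z => f z a) s x) =
          marg (fun z => f z t) s y / (∑ a ∈ A, marg (fun z => f z a) s y)) := by
  have hs1 : 1 ≤ s := by omega
  have hsd' : s - 1 < d := by omega
  have hss : s - 1 + 1 = s := by omega
  set i : Fin d := ⟨s - 1, hsd'⟩ with hi
  -- positivity
  have hFpos : ∀ x, 0 < marg (fun z => f z t) s x :=
    fun x => marg_pos (fun z => hf z t) s x
  have hFmpos : ∀ x, 0 < marg (fun z => f z t) (s - 1) x :=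
    fun x => marg_pos (fun z => hf z t) (s - 1) x
  have hGpos : ∀ x, 0 < ∑ a ∈ A, marg (fun z => f z a) s x :=
    fun x => Finset.sum_pos (fun a _ => marg_pos (fun z => hf z a) s x) hAne
  have hGmpos : ∀ x, 0 < ∑ a ∈ A, marg (fun z => f z a) (s - 1) x :=
    fun x => Finset.sum_pos (fun a _ => marg_pos (fun z => hf z a) (s - 1) x) hAne
  -- step identities
  have hFstep : ∀ x, marg (fun z => f z t) (s - 1) x =
      ∑ v : α, marg (fun z => f z t) s (Function.update x i v) := by
    intro x
    have := marg_step (fun z => f z t) hsd' x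
    rwa [hss] at this
  have hGstep : ∀ x, (∑ a ∈ A, marg (fun z => f z a) (s - 1) x) =
      ∑ v : α, ∑ a ∈ A, marg (fun z => f z a) s (Function.update x i v) := by
    intro x
    rw [Finset.sum_comm]
    refine Finset.sum_congr rfl fun a _ => ?_
    have := marg_step (fun z => f z a) hsd' x
    rwa [hss] at this
  constructor
  · intro H x y hxy
    have hxy' : ∀ j : Fin d, (j : ℕ) < s - 1 → x j = y j := fun j hj => hxy j (by omega)
    have hFm : marg (fun z => f z t) (s - 1) x = marg (fun z => f z t) (s - 1) y :=
      marg_congr _ _ hxy'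
    have hGm : (∑ a ∈ A, marg (fun z => f z a) (s - 1) x) =
        ∑ a ∈ A, marg (fun z => f z a) (s - 1) y :=
      Finset.sum_congr rfl fun a _ => marg_congr _ _ hxy'
    have e1 := (div_eq_div_iff (hFmpos x).ne' (hGmpos x).ne').mp (H x)
    have e2 := (div_eq_div_iff (hFmpos y).ne' (hGmpos y).ne').mp (H y)
    rw [hFm, hGm] at e1
    rw [div_eq_div_iff (hGpos x).ne' (hGpos y).ne']
    have hFmy := (hFmpos y).ne'
    have hGmy := (hGmpos y).ne'
    -- e1 : F x * Gm y = G x * Fm y ; e2 : F y * Gm y = G y * Fm y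
    -- goal : F x * G y = F y * G x
    have h3 : (marg (fun z => f z t) s x * (∑ a ∈ A, marg (fun z => f z a) s y))
        * (marg (fun z => f z t) (s-1) y * (∑ a ∈ A, marg (fun z => f z a) (s-1) y))
        = (marg (fun z => f z t) s y * (∑ a ∈ A, marg (fun z => f z a) s x))
        * (marg (fun z => f z t) (s-1) y * (∑ a ∈ A, marg (fun z => f z a) (s-1) y)) := by
      linear_combination ((∑ a ∈ A, marg (fun z => f z a) s y)
          * marg (fun z => f z t) (s-1) y) * e1
        - ((∑ a ∈ A, marg (fun z => f z a) s x)
          * marg (fun z => f z t) (s-1) y) * e2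
    have hpos : 0 < marg (fun z => f z t) (s-1) y * (∑ a ∈ A, marg (fun z => f z a) (s-1) y) :=
      mul_pos (hFmpos y) (hGmpos y)
    exact mul_right_cancel₀ hpos.ne' h3
  · intro H x
    have hupd : ∀ v : α,
        marg (fun z => f z t) s (Function.update x i v)
          * (∑ a ∈ A, marg (fun z => f z a) s x)
        = marg (fun z => f z t) s x
          * (∑ a ∈ A, marg (fun z => f z a) s (Function.update x i v)) := by
      intro v
      have hag : ∀ j : Fin d, (j : ℕ) + 1 < s → Function.update x i v j = x j := by
        intro j hj
        refine Function.update_of_ne ?_ _ _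
        intro e
        have : (j : ℕ) = s - 1 := by rw [e]
        omega
      exact (div_eq_div_iff (hGpos _).ne' (hGpos x).ne').mp (H (Function.update x i v) x hag)
    have key : marg (fun z => f z t) (s - 1) x * (∑ a ∈ A, marg (fun z => f z a) s x)
        = marg (fun z => f z t) s x * (∑ a ∈ A, marg (fun z => f z a) (s - 1) x) := by
      rw [hFstep x, hGstep x, Finset.sum_mul, Finset.mul_sum]
      exact Finset.sum_congr rfl fun v _ => hupd v
    rw [div_eq_div_iff (hFmpos x).ne' (hGmpos x).ne']
    linear_combination -key
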